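/- Fix μ0, μ1 > 0 and real numbers d0, d1. Let X_m, X_n ∈ C²([0,1],ℝ) and λ_m, λ_n ∈ ℝ with λ_m ≠ λ_n satisfy, for i ∈ {m,n}: X_i'' = λ_i·X_i on [0,1], X_i'(0) = μ0·(λ_i + d0)·X_i(0) and X_i'(1) = −μ1·(λ_i + d1)·X_i(1). Then X_m and X_n are orthogonal with respect to the modified scalar product, i.e. μ0·X_m(0)·X_n(0) + μ1·X_m(1)·X_n(1) + ∫₀¹ X_m(x)·X_n(x) dx = 0. -/

import Mathlib

open Real Set

/-- Eigenfunctions of the string–point-mass problem associated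
with distinct eigenvalues are orthogonal with respect to the modified scalar
product ⟨⟨u,v⟩⟩ = μ0 u(0)v(0) + μ1 u(1)v(1) + ∫₀¹ u v. -/
theorem eigenfunctions_orthogonal_modified_product
    (μ0 μ1 d0 d1 : ℝ) (hμ0 : 0 < μ0) (hμ1 : 0 < μ1)
    (Xm Xn : ℝ → ℝ) (lamm lamn : ℝ) (hne : lamm ≠ lamn)
    (hXm : ContDiff ℝ 2 Xm) (hXn : ContDiff ℝ 2 Xn)
    (hodem : ∀ x ∈ Icc (0:ℝ) 1, deriv (deriv Xm) x = lamm * Xm x)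
    (hoden : ∀ x ∈ Icc (0:ℝ) 1, deriv (deriv Xn) x = lamn * Xn x)
    (hbc0m : deriv Xm 0 = μ0 * (lamm + d0) * Xm 0)
    (hbc1m : deriv Xm 1 = -μ1 * (lamm + d1) * Xm 1)
    (hbc0n : deriv Xn 0 = μ0 * (lamn + d0) * Xn 0)
    (hbc1n : deriv Xn 1 = -μ1 * (lamn + d1) * Xn 1) :
    μ0 * Xm 0 * Xn 0 + μ1 * Xm 1 * Xn 1 + ∫ x in (0:ℝ)..1, Xm x * Xn x = 0 := by
  have h2 : (2:ℕ∞) = 1 + 1 := by norm_num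
  have hXmd : Differentiable ℝ Xm := hXm.differentiable (by norm_num)
  have hXnd : Differentiable ℝ Xn := hXn.differentiable (by norm_num)
  have hXm2 : ContDiff ℝ ((1:ℕ∞)+1) Xm := hXm.of_le (by norm_num)
  have hXn2 : ContDiff ℝ ((1:ℕ∞)+1) Xn := hXn.of_le (by norm_num)
  have hXm'd : Differentiable ℝ (deriv Xm) :=
    (contDiff_succ_iff_deriv.mp hXm2).2.2.differentiable (by norm_num)
  have hXn'd : Differentiable ℝ (deriv Xn) :=
    (contDiff_succ_iff_deriv.mp hXn2).2.2.differentiable (by norm_num)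
  set W : ℝ → ℝ := fun x => Xm x * deriv Xn x - Xn x * deriv Xm x with hW
  have hderiv : ∀ x ∈ uIcc (0:ℝ) 1, HasDerivAt W ((lamn - lamm) * (Xm x * Xn x)) x := by
    intro x hx
    rw [uIcc_of_le (by norm_num)] at hx
    have h1 : HasDerivAt W (deriv Xm x * deriv Xn x + Xm x * deriv (deriv Xn) x
        - (deriv Xn x * deriv Xm x + Xn x * deriv (deriv Xm) x)) x :=
      (((hXmd x).hasDerivAt.mul (hXn'd x).hasDerivAt).sub
        ((hXnd x).hasDerivAt.mul (hXm'd x).hasDerivAt))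
    convert h1 using 1
    rw [hodem x hx, hoden x hx]; ring
  have hcont : IntervalIntegrable (fun x => (lamn - lamm) * (Xm x * Xn x))
      MeasureTheory.volume 0 1 :=
    (Continuous.intervalIntegrable (continuous_const.mul (hXm.continuous.mul hXn.continuous)) 0 1)
  have hFTC := intervalIntegral.integral_eq_sub_of_hasDerivAt hderiv hcont
  have hint : IntervalIntegrable (fun x => Xm x * Xn x) MeasureTheory.volume 0 1 :=
    (Continuous.intervalIntegrable (hXm.continuous.mul hXn.continuous) 0 1)
  rw [intervalIntegral.integral_const_mul] at hFTC
  have hW1 : W 1 = (lamn - lamm) * (-μ1 * (Xm 1 * Xn 1)) := by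
    simp only [hW, hbc1m, hbc1n]; ring
  have hW0 : W 0 = (lamn - lamm) * (μ0 * (Xm 0 * Xn 0)) := by
    simp only [hW, hbc0m, hbc0n]; ring
  rw [hW1, hW0] at hFTC
  have hne' : lamn - lamm ≠ 0 := sub_ne_zero.mpr (Ne.symm hne)
  have key : (∫ x in (0:ℝ)..1, Xm x * Xn x) =
      -μ1 * (Xm 1 * Xn 1) - μ0 * (Xm 0 * Xn 0) := by
    apply mul_left_cancel₀ hne'
    rw [hFTC]; ring
  rw [key]; ring
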